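/- (Theorem 2, part 2, genericity made precise) In a finite two-player multistage game, suppose that for every player i and every k ≥ 1 the survivor set Σᵏ_{θ_{ik}} of the dynamic Δ^κ-rationalization procedure contains exactly one element. Then Λᵏ_{θ_{ik}} = Σᵏ_{θ_{ik}} for every player i and every k ∈ ℕ₀, and consequently Λ^∞_{θ_i} = Σ^∞_{θ_i} for every type θ_i: the DCH solution coincides with dynamic Δ^κ-rationalizability. -/

import Mathlib

open scoped BigOperators
open Classical

noncomputable section

/-- A two-player multistage game: feasibility correspondences assigning to each history
(a finite sequence of action profiles, most recent first; `[]` is the root `∅`) the set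
of feasible actions of each player. -/
structure MSGame (A B : Type*) where
  feas1 : List (A × B) → Finset A
  feas2 : List (A × B) → Finset B

namespace MSGame

variable {A B : Type*}

/-- A history is terminal iff no player has a feasible action there. -/
def terminal (G : MSGame A B) (h : List (A × B)) : Prop :=
  G.feas1 h = ∅ ∧ G.feas2 h = ∅

/-- Feasible histories: the root is feasible, and a profile may be appended to a
feasible non-terminal history iff each component is feasible for its player. -/
def feasible (G : MSGame A B) : List (A × B) → Prop
  | [] => True
  | p :: h => feasible G h ∧ ¬G.terminal h ∧ p.1 ∈ G.feas1 h ∧ p.2 ∈ G.feas2 h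

/-- Well-formedness: the "wait" convention (an inactive player has exactly her waiting
move, so one feasibility set is empty iff the other is), finitely many feasible
histories, and a nontrivial root. -/
def WellFormed (G : MSGame A B) : Prop :=
  (∀ h : List (A × B), (G.feas1 h = ∅ ↔ G.feas2 h = ∅)) ∧
  {h : List (A × B) | G.feasible h}.Finite ∧ ¬G.terminal []

/-- The set `H` of non-terminal feasible histories, as a type. -/
def Hist (G : MSGame A B) : Type _ := {h : List (A × B) // G.feasible h ∧ ¬G.terminal h}

end MSGame

/-- A strategy of player 1: a feasible action at every non-terminal feasible history. -/
structure Strat1 {A B : Type*} (G : MSGame A B) where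
  act : G.Hist → A
  mem : ∀ h : G.Hist, act h ∈ G.feas1 h.1

/-- A strategy of player 2. -/
structure Strat2 {A B : Type*} (G : MSGame A B) where
  act : G.Hist → B
  mem : ∀ h : G.Hist, act h ∈ G.feas2 h.1

/-- `s ∈ S₁(h)`: player 1's strategy `s` is consistent with reaching history `h`
(it prescribes, at every proper prefix of `h`, the action played in `h`). -/
def consistent1 {A B : Type*} (G : MSGame A B) (s : Strat1 G) (h : List (A × B)) : Prop :=
  ∀ (h' : G.Hist) (p : A × B) (l : List (A × B)), h = l ++ p :: h'.1 → s.act h' = p.1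

/-- `s ∈ S₂(h)`. -/
def consistent2 {A B : Type*} (G : MSGame A B) (s : Strat2 G) (h : List (A × B)) : Prop :=
  ∀ (h' : G.Hist) (p : A × B) (l : List (A × B)), h = l ++ p :: h'.1 → s.act h' = p.2

/-- Fuelled play function. -/
def playAux {A B : Type*} (G : MSGame A B) (s1 : Strat1 G) (s2 : Strat2 G) :
    ℕ → List (A × B) → List (A × B)
  | 0, h => h
  | n + 1, h =>
      if hf : G.feasible h ∧ ¬G.terminal h then
        playAux G s1 s2 n ((s1.act ⟨h, hf⟩, s2.act ⟨h, hf⟩) :: h)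
      else h

/-- The terminal history `ζ(s₁,s₂)` induced by a strategy profile (in a well-formed
game the fuel suffices to reach a terminal history). -/
def play {A B : Type*} (G : MSGame A B) (s1 : Strat1 G) (s2 : Strat2 G) : List (A × B) :=
  playAux G s1 s2 ({h : List (A × B) | G.feasible h}.ncard + 1) []

/-- Player 1's payoff `U₁(θ, s)`: the level-0 type gets constant 0, other levels get
`v₁` at the induced terminal history. -/
def payU1 {A B : Type*} (G : MSGame A B) (v1 : List (A × B) → ℝ)
    (θ : ℕ) (s1 : Strat1 G) (s2 : Strat2 G) : ℝ :=
  if θ = 0 then 0 else v1 (play G s1 s2)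

/-- Player 2's payoff `U₂(θ, s)`. -/
def payU2 {A B : Type*} (G : MSGame A B) (v2 : List (A × B) → ℝ)
    (θ : ℕ) (s1 : Strat1 G) (s2 : Strat2 G) : ℝ :=
  if θ = 0 then 0 else v2 (play G s1 s2)

/-- A conditional probability system of player 1 over (opponent level, opponent
strategy) pairs: at each `h ∈ H` a probability distribution concentrated on
`Θ × S₂(h)`, satisfying the chain rule. -/
structure CPS2 {A B : Type*} (G : MSGame A B) where
  p : G.Hist → ℕ × Strat2 G → ℝ
  nonneg : ∀ h x, 0 ≤ p h x
  supp : ∀ h x, p h x ≠ 0 → consistent2 G x.2 h.1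
  hasSum_one : ∀ h, HasSum (p h) 1
  chain : ∀ h' h'' : G.Hist, h'.1 <:+ h''.1 → h'.1 ≠ h''.1 →
    ∀ x : ℕ × Strat2 G, consistent2 G x.2 h''.1 →
      p h' x = p h'' x * ∑' y : ℕ × Strat2 G, (if consistent2 G y.2 h''.1 then p h' y else 0)

/-- A conditional probability system of player 2. -/
structure CPS1 {A B : Type*} (G : MSGame A B) where
  p : G.Hist → ℕ × Strat1 G → ℝ
  nonneg : ∀ h x, 0 ≤ p h x
  supp : ∀ h x, p h x ≠ 0 → consistent1 G x.2 h.1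
  hasSum_one : ∀ h, HasSum (p h) 1
  chain : ∀ h' h'' : G.Hist, h'.1 <:+ h''.1 → h'.1 ≠ h''.1 →
    ∀ x : ℕ × Strat1 G, consistent1 G x.2 h''.1 →
      p h' x = p h'' x * ∑' y : ℕ × Strat1 G, (if consistent1 G y.2 h''.1 then p h' y else 0)

/-- Marginal probability of the opponent's level-`t` type at history `h` (player 1's CPS). -/
def margD2 {A B : Type*} {G : MSGame A B} (μ : CPS2 G) (h : G.Hist) (t : ℕ) : ℝ :=
  ∑' s : Strat2 G, μ.p h (t, s)

def margD1 {A B : Type*} {G : MSGame A B} (μ : CPS1 G) (h : G.Hist) (t : ℕ) : ℝ :=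
  ∑' s : Strat1 G, μ.p h (t, s)

/-- `f` normalized to the levels `0, …, k-1` (`f^k` in the paper). -/
def fnorm (f : ℕ → ℝ) (k t : ℕ) : ℝ := f t / ∑ ℓ ∈ Finset.range k, f ℓ

/-- DK1–DK3 (membership in the dynamic `Δ^{θ_{1k}}`); no restriction for `k = 0`. -/
def memDeltaD2 {A B : Type*} (G : MSGame A B) (f : ℕ → ℝ) (k : ℕ) (μ : CPS2 G) : Prop :=
  k ≠ 0 →
    ((∀ (h : G.Hist) (t : ℕ), k ≤ t → margD2 μ h t = 0) ∧
     (∀ h : G.Hist, 0 < margD2 μ h 0 →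
        ∀ s : Strat2 G, consistent2 G s h.1 →
          μ.p h (0, s) / margD2 μ h 0 =
            1 / (({s' : Strat2 G | consistent2 G s' h.1}).ncard : ℝ)) ∧
     (∀ hr : G.feasible [] ∧ ¬G.terminal [],
        ∀ t : ℕ, t < k → margD2 μ ⟨[], hr⟩ t = fnorm f k t))

def memDeltaD1 {A B : Type*} (G : MSGame A B) (f : ℕ → ℝ) (k : ℕ) (μ : CPS1 G) : Prop :=
  k ≠ 0 →
    ((∀ (h : G.Hist) (t : ℕ), k ≤ t → margD1 μ h t = 0) ∧
     (∀ h : G.Hist, 0 < margD1 μ h 0 →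
        ∀ s : Strat1 G, consistent1 G s h.1 →
          μ.p h (0, s) / margD1 μ h 0 =
            1 / (({s' : Strat1 G | consistent1 G s' h.1}).ncard : ℝ)) ∧
     (∀ hr : G.feasible [] ∧ ¬G.terminal [],
        ∀ t : ℕ, t < k → margD1 μ ⟨[], hr⟩ t = fnorm f k t))

/-- Player 1's conditional expected payoff at `h` from strategy `s1`, own level `θ`. -/
def expU1 {A B : Type*} (G : MSGame A B) (v1 : List (A × B) → ℝ)
    (θ : ℕ) (μ : CPS2 G) (h : G.Hist) (s1 : Strat1 G) : ℝ :=
  ∑' x : ℕ × Strat2 G, μ.p h x * payU1 G v1 θ s1 x.2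

def expU2 {A B : Type*} (G : MSGame A B) (v2 : List (A × B) → ℝ)
    (θ : ℕ) (μ : CPS1 G) (h : G.Hist) (s2 : Strat2 G) : ℝ :=
  ∑' x : ℕ × Strat1 G, μ.p h x * payU2 G v2 θ x.2 s2

/-- Sequential rationality of `s1` for the level-`θ` type of player 1 w.r.t. CPS `μ`. -/
def seqRat1 {A B : Type*} (G : MSGame A B) (v1 : List (A × B) → ℝ)
    (θ : ℕ) (μ : CPS2 G) (s1 : Strat1 G) : Prop :=
  ∀ h : G.Hist, consistent1 G s1 h.1 →
    ∀ s1' : Strat1 G, consistent1 G s1' h.1 →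
      expU1 G v1 θ μ h s1' ≤ expU1 G v1 θ μ h s1

def seqRat2 {A B : Type*} (G : MSGame A B) (v2 : List (A × B) → ℝ)
    (θ : ℕ) (μ : CPS1 G) (s2 : Strat2 G) : Prop :=
  ∀ h : G.Hist, consistent2 G s2 h.1 →
    ∀ s2' : Strat2 G, consistent2 G s2' h.1 →
      expU2 G v2 θ μ h s2' ≤ expU2 G v2 θ μ h s2

/-- The dynamic Δ^κ-rationalization procedure (pairs of surviving
(level, strategy) sets for the two players). -/
def SigmaD {A B : Type*} (G : MSGame A B) (v1 v2 : List (A × B) → ℝ) (f : ℕ → ℝ) :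
    ℕ → Set (ℕ × Strat1 G) × Set (ℕ × Strat2 G)
  | 0 => (Set.univ, Set.univ)
  | n + 1 =>
      let P := SigmaD G v1 v2 f n
      ({x | x ∈ P.1 ∧ ∃ μ : CPS2 G, memDeltaD2 G f x.1 μ ∧
          (∀ h : G.Hist, (∃ y : ℕ × Strat2 G, y ∈ P.2 ∧ consistent2 G y.2 h.1) →
            ∑' y : ℕ × Strat2 G, Set.indicator P.2 (μ.p h) y = 1) ∧
          seqRat1 G v1 x.1 μ x.2},
       {x | x ∈ P.2 ∧ ∃ μ : CPS1 G, memDeltaD1 G f x.1 μ ∧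
          (∀ h : G.Hist, (∃ y : ℕ × Strat1 G, y ∈ P.1 ∧ consistent1 G y.2 h.1) →
            ∑' y : ℕ × Strat1 G, Set.indicator P.1 (μ.p h) y = 1) ∧
          seqRat2 G v2 x.1 μ x.2})

/-- The section `Σⁿ_{θ_{1k}}` (a set of strategies of player 1). -/
def SigmaDSec1 {A B : Type*} (G : MSGame A B) (v1 v2 : List (A × B) → ℝ) (f : ℕ → ℝ)
    (n k : ℕ) : Set (Strat1 G) :=
  {s | (k, s) ∈ (SigmaD G v1 v2 f n).1}

def SigmaDSec2 {A B : Type*} (G : MSGame A B) (v1 v2 : List (A × B) → ℝ) (f : ℕ → ℝ)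
    (n k : ℕ) : Set (Strat2 G) :=
  {s | (k, s) ∈ (SigmaD G v1 v2 f n).2}

/-- The DCH-procedure: step `n` returns, for each player and each level `k`, the set of
surviving strategies `Λⁿ_{θ_{ik}}`. -/
def LambdaD {A B : Type*} (G : MSGame A B) (v1 v2 : List (A × B) → ℝ) (f : ℕ → ℝ) :
    ℕ → (ℕ → Set (Strat1 G)) × (ℕ → Set (Strat2 G))
  | 0 => (fun _ => Set.univ, fun _ => Set.univ)
  | n + 1 =>
      let P := LambdaD G v1 v2 f n
      (fun k =>
        if k = n + 1 then
          {s | ∃ μ : CPS2 G, memDeltaD2 G f (n + 1) μ ∧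
            (∀ hr : G.feasible [] ∧ ¬G.terminal [],
              (∀ x : ℕ × Strat2 G, μ.p ⟨[], hr⟩ x ≠ 0 ↔ x.1 ≤ n ∧ x.2 ∈ P.2 x.1) ∧
              (∀ t : ℕ, t ≤ n → ∀ s2 s2' : Strat2 G, s2 ∈ P.2 t → s2' ∈ P.2 t →
                μ.p ⟨[], hr⟩ (t, s2) = μ.p ⟨[], hr⟩ (t, s2'))) ∧
            seqRat1 G v1 (n + 1) μ s}
        else P.1 k,
       fun k =>
        if k = n + 1 then
          {s | ∃ μ : CPS1 G, memDeltaD1 G f (n + 1) μ ∧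
            (∀ hr : G.feasible [] ∧ ¬G.terminal [],
              (∀ x : ℕ × Strat1 G, μ.p ⟨[], hr⟩ x ≠ 0 ↔ x.1 ≤ n ∧ x.2 ∈ P.1 x.1) ∧
              (∀ t : ℕ, t ≤ n → ∀ s1 s1' : Strat1 G, s1 ∈ P.1 t → s1' ∈ P.1 t →
                μ.p ⟨[], hr⟩ (t, s1) = μ.p ⟨[], hr⟩ (t, s1'))) ∧
            seqRat2 G v2 (n + 1) μ s}
        else P.2 k)

/-- `Λⁿ_{θ_{1k}}`. -/
def LambdaDSec1 {A B : Type*} (G : MSGame A B) (v1 v2 : List (A × B) → ℝ) (f : ℕ → ℝ)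
    (n k : ℕ) : Set (Strat1 G) :=
  (LambdaD G v1 v2 f n).1 k

/-- `Λⁿ_{θ_{2k}}`. -/
def LambdaDSec2 {A B : Type*} (G : MSGame A B) (v1 v2 : List (A × B) → ℝ) (f : ℕ → ℝ)
    (n k : ℕ) : Set (Strat2 G) :=
  (LambdaD G v1 v2 f n).2 k

end

section TsumAux

variable {ι : Type*}

lemma myTsum_indicator_of_support_subset (p : ι → ℝ) {P : Set ι}
    (h : ∀ x, p x ≠ 0 → x ∈ P) : ∑' x, Set.indicator P p x = ∑' x, p x :=
  tsum_congr fun x => Set.indicator_apply_eq_self.2 fun hx => by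
    by_contra h0; exact hx (h x h0)

lemma myEq_zero_of_tsum_zero {p : ι → ℝ} (hs : Summable p) (hn : ∀ x, 0 ≤ p x)
    (h0 : ∑' x, p x = 0) (x : ι) : p x = 0 :=
  le_antisymm (h0 ▸ Summable.le_tsum hs x fun j _ => hn j) (hn x)

lemma mySupport_of_indicator_tsum_one {p : ι → ℝ} (hsum : HasSum p 1)
    (hn : ∀ x, 0 ≤ p x) {P : Set ι} (h1 : ∑' x, Set.indicator P p x = 1) :
    ∀ x ∉ P, p x = 0 := by
  intro x hx
  have hsp : Summable p := hsum.summable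
  have hsi : Summable (P.indicator p) := hsp.indicator P
  have hle : ∀ y, P.indicator p y ≤ p y := fun y => Set.indicator_le_self' (fun y _ => hn y) y
  have hd : ∑' y, (p y - P.indicator p y) = 0 := by
    rw [Summable.tsum_sub hsp hsi, hsum.tsum_eq, h1]; ring
  have hz := myEq_zero_of_tsum_zero (hsp.sub hsi) (fun y => sub_nonneg.2 (hle y)) hd x
  have : P.indicator p x = 0 := Set.indicator_of_notMem hx p
  linarith

lemma mySummable_slice {α : Type*} {p : ℕ × α → ℝ} (hs : Summable p) (t : ℕ) :
    Summable (fun s => p (t, s)) :=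
  hs.comp_injective (fun a b h => (Prod.mk.injEq t a t b ▸ h : _ ∧ _).2)

/-- counting lemma for "uniform on level 0" functions -/
lemma myTsum_level0 {α : Type*} [Finite α] (Q : α → Prop) (c : ℝ) :
    Summable (fun y : ℕ × α => if y.1 = 0 ∧ Q y.2 then c else 0) ∧
    ∑' y : ℕ × α, (if y.1 = 0 ∧ Q y.2 then c else 0) = ({s | Q s}.ncard : ℝ) * c := by
  classical
  haveI := Fintype.ofFinite α
  set g : ℕ × α → ℝ := fun y => if y.1 = 0 ∧ Q y.2 then c else 0 with hg
  set F : Finset (ℕ × α) := (Finset.univ.filter Q).image (fun s => ((0 : ℕ), s)) with hF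
  have hvanish : ∀ y ∉ F, g y = 0 := by
    intro y hy
    by_contra h0
    have hy1 : y.1 = 0 ∧ Q y.2 := by
      by_contra hc; exact h0 (if_neg hc)
    exact hy (Finset.mem_image.2 ⟨y.2, Finset.mem_filter.2 ⟨Finset.mem_univ _, hy1.2⟩,
      by rw [← hy1.1]⟩)
  have hsummable : Summable g := summable_of_ne_finset_zero hvanish
  refine ⟨hsummable, ?_⟩
  rw [tsum_eq_sum hvanish]
  rw [hF, Finset.sum_image (by intro a _ b _ hab; exact (Prod.mk.injEq _ _ _ _ ▸ hab : _ ∧ _).2)]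
  have : ∀ s ∈ Finset.univ.filter Q, g ((0 : ℕ), s) = c := by
    intro s hs
    exact if_pos ⟨rfl, (Finset.mem_filter.1 hs).2⟩
  rw [Finset.sum_congr rfl this, Finset.sum_const, nsmul_eq_mul]
  congr 2
  rw [Set.ncard_eq_toFinset_card']
  simp

end TsumAux
section GameAux

variable {A B : Type*} {G : MSGame A B}

lemma myFeasible_suffix : ∀ (t l : List (A × B)), G.feasible (t ++ l) → G.feasible l := by
  intro t
  induction t with
  | nil => intro l h; simpa using h
  | cons a t ih =>
    intro l h
    exact ih l (h : G.feasible (a :: (t ++ l))).1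

lemma myCons_suffix_unique {l l' t : List (A × B)} {p q : A × B}
    (h : l ++ p :: t = l' ++ q :: t) : p = q := by
  have hlen : l.length = l'.length := by
    have := congrArg List.length h; simp at this; omega
  have := List.append_inj_right h hlen
  exact (List.cons.injEq _ _ _ _ ▸ this).1

/-- the root history -/
def myRoot (G : MSGame A B) (hG : G.WellFormed) : G.Hist := ⟨[], trivial, hG.2.2⟩

lemma myConsistent1_nil (s : Strat1 G) : consistent1 G s [] := by
  intro h' p l hl; exact absurd hl (by simp)

lemma myConsistent2_nil (s : Strat2 G) : consistent2 G s [] := by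
  intro h' p l hl; exact absurd hl (by simp)

lemma myConsistent1_mono {s : Strat1 G} {h1 h2 : List (A × B)} (hsub : h1 <:+ h2)
    (hc : consistent1 G s h2) : consistent1 G s h1 := by
  obtain ⟨t, ht⟩ := hsub
  intro h' p l hl
  exact hc h' p (t ++ l) (by rw [← ht, hl, List.append_assoc])

lemma myConsistent2_mono {s : Strat2 G} {h1 h2 : List (A × B)} (hsub : h1 <:+ h2)
    (hc : consistent2 G s h2) : consistent2 G s h1 := by
  obtain ⟨t, ht⟩ := hsub
  intro h' p l hl
  exact hc h' p (t ++ l) (by rw [← ht, hl, List.append_assoc])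

lemma myFinite_hist (hG : G.WellFormed) : Finite G.Hist := by
  have h2 : {h : List (A × B) | G.feasible h ∧ ¬G.terminal h}.Finite :=
    hG.2.1.subset fun h hh => hh.1
  exact h2.to_subtype

lemma myFinite_strat1 (hG : G.WellFormed) : Finite (Strat1 G) := by
  haveI := myFinite_hist hG
  apply Finite.of_injective
    (fun s : Strat1 G => (fun h => (⟨s.act h, s.mem h⟩ : {a // a ∈ G.feas1 h.1})))
  intro s s' hss
  cases s; cases s'
  simp only [Strat1.mk.injEq]
  funext h
  exact congrArg Subtype.val (congrFun hss h)

lemma myFinite_strat2 (hG : G.WellFormed) : Finite (Strat2 G) := by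
  haveI := myFinite_hist hG
  apply Finite.of_injective
    (fun s : Strat2 G => (fun h => (⟨s.act h, s.mem h⟩ : {b // b ∈ G.feas2 h.1})))
  intro s s' hss
  cases s; cases s'
  simp only [Strat2.mk.injEq]
  funext h
  exact congrArg Subtype.val (congrFun hss h)

lemma myFeas1_nonempty (hG : G.WellFormed) (h : G.Hist) : (G.feas1 h.1).Nonempty := by
  rcases h with ⟨h, hf, ht⟩
  rw [Finset.nonempty_iff_ne_empty]
  intro he
  exact ht ⟨he, (hG.1 h).1 he⟩

lemma myFeas2_nonempty (hG : G.WellFormed) (h : G.Hist) : (G.feas2 h.1).Nonempty := by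
  rcases h with ⟨h, hf, ht⟩
  rw [Finset.nonempty_iff_ne_empty]
  intro he
  exact ht ⟨(hG.1 h).2 he, he⟩

/-- a strategy of player 1 consistent with a given feasible history -/
noncomputable def myConsStrat1 (hG : G.WellFormed) (h : List (A × B)) (hfe : G.feasible h) : Strat1 G where
  act h' := if hx : ∃ p : A × B, ∃ l, h = l ++ p :: h'.1 then hx.choose.1
            else (myFeas1_nonempty hG h').choose
  mem h' := by
    by_cases hx : ∃ p : A × B, ∃ l, h = l ++ p :: h'.1
    · rw [dif_pos hx]
      obtain ⟨l, hl⟩ := hx.choose_spec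
      have hfs : G.feasible (hx.choose :: h'.1) :=
        myFeasible_suffix l _ (by rw [← hl]; exact hfe)
      exact hfs.2.2.1
    · rw [dif_neg hx]
      exact (myFeas1_nonempty hG h').choose_spec

noncomputable def myConsStrat2 (hG : G.WellFormed) (h : List (A × B)) (hfe : G.feasible h) : Strat2 G where
  act h' := if hx : ∃ p : A × B, ∃ l, h = l ++ p :: h'.1 then hx.choose.2
            else (myFeas2_nonempty hG h').choose
  mem h' := by
    by_cases hx : ∃ p : A × B, ∃ l, h = l ++ p :: h'.1
    · rw [dif_pos hx]
      obtain ⟨l, hl⟩ := hx.choose_spec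
      have hfs : G.feasible (hx.choose :: h'.1) :=
        myFeasible_suffix l _ (by rw [← hl]; exact hfe)
      exact hfs.2.2.2
    · rw [dif_neg hx]
      exact (myFeas2_nonempty hG h').choose_spec

lemma myConsStrat1_consistent (hG : G.WellFormed) (h : List (A × B)) (hfe : G.feasible h) :
    consistent1 G (myConsStrat1 hG h hfe) h := by
  intro h' p l hl
  have hx : ∃ p : A × B, ∃ l, h = l ++ p :: h'.1 := ⟨p, l, hl⟩
  show (if hx' : ∃ p : A × B, ∃ l, h = l ++ p :: h'.1 then hx'.choose.1
        else (myFeas1_nonempty hG h').choose) = p.1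
  rw [dif_pos hx]
  obtain ⟨l', hl'⟩ := hx.choose_spec
  rw [myCons_suffix_unique (hl'.symm.trans hl)]

lemma myConsStrat2_consistent (hG : G.WellFormed) (h : List (A × B)) (hfe : G.feasible h) :
    consistent2 G (myConsStrat2 hG h hfe) h := by
  intro h' p l hl
  have hx : ∃ p : A × B, ∃ l, h = l ++ p :: h'.1 := ⟨p, l, hl⟩
  show (if hx' : ∃ p : A × B, ∃ l, h = l ++ p :: h'.1 then hx'.choose.2
        else (myFeas2_nonempty hG h').choose) = p.2
  rw [dif_pos hx]
  obtain ⟨l', hl'⟩ := hx.choose_spec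
  rw [myCons_suffix_unique (hl'.symm.trans hl)]

lemma myNcard_S1_pos (hG : G.WellFormed) (h : G.Hist) :
    0 < {s : Strat1 G | consistent1 G s h.1}.ncard := by
  haveI := myFinite_strat1 (G := G) hG
  exact (Set.ncard_pos (Set.toFinite _)).2
    ⟨myConsStrat1 hG h.1 h.2.1, myConsStrat1_consistent hG h.1 h.2.1⟩

lemma myNcard_S2_pos (hG : G.WellFormed) (h : G.Hist) :
    0 < {s : Strat2 G | consistent2 G s h.1}.ncard := by
  haveI := myFinite_strat2 (G := G) hG
  exact (Set.ncard_pos (Set.toFinite _)).2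
    ⟨myConsStrat2 hG h.1 h.2.1, myConsStrat2_consistent hG h.1 h.2.1⟩

end GameAux
section CPSAux

variable {A B : Type*} {G : MSGame A B}

/-- uniform level-0 CPS of player 1 (beliefs about player 2) -/
noncomputable def myUnif2 (hG : G.WellFormed) : CPS2 G :=
  haveI := myFinite_strat2 (G := G) hG
  { p := fun h x => if x.1 = 0 ∧ consistent2 G x.2 h.1 then
      (({s : Strat2 G | consistent2 G s h.1}).ncard : ℝ)⁻¹ else 0
    nonneg := fun h x => by
      split
      · positivity
      · exact le_refl 0
    supp := fun h x hx => by
      by_contra hc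
      exact hx (if_neg (fun hand => hc hand.2))
    hasSum_one := fun h => by
      obtain ⟨hsum, hval⟩ := myTsum_level0 (fun s : Strat2 G => consistent2 G s h.1)
        ((({s : Strat2 G | consistent2 G s h.1}).ncard : ℝ)⁻¹)
      refine hsum.hasSum_iff.2 ?_
      rw [hval, mul_inv_cancel₀]
      exact_mod_cast (myNcard_S2_pos hG h).ne'
    chain := fun h' h'' hsub hne x hx => by
      haveI := myFinite_strat2 (G := G) hG
      set N' := (({s : Strat2 G | consistent2 G s h'.1}).ncard : ℝ) with hN'
      set N'' := (({s : Strat2 G | consistent2 G s h''.1}).ncard : ℝ) with hN''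
      have hN'pos : 0 < N' := by rw [hN']; exact_mod_cast myNcard_S2_pos hG h'
      have hN''pos : 0 < N'' := by rw [hN'']; exact_mod_cast myNcard_S2_pos hG h''
      have hsum : (∑' y : ℕ × Strat2 G,
          (if consistent2 G y.2 h''.1 then
            (if y.1 = 0 ∧ consistent2 G y.2 h'.1 then N'⁻¹ else 0) else 0)) = N'' * N'⁻¹ := by
        have hcongr : ∀ y : ℕ × Strat2 G,
            (if consistent2 G y.2 h''.1 then
              (if y.1 = 0 ∧ consistent2 G y.2 h'.1 then N'⁻¹ else 0) else 0) =
            (if y.1 = 0 ∧ consistent2 G y.2 h''.1 then N'⁻¹ else 0) := by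
          intro y
          by_cases hy : consistent2 G y.2 h''.1
          · rw [if_pos hy]
            by_cases hy1 : y.1 = 0
            · rw [if_pos ⟨hy1, myConsistent2_mono hsub hy⟩, if_pos ⟨hy1, hy⟩]
            · rw [if_neg (fun hand => hy1 hand.1), if_neg (fun hand => hy1 hand.1)]
          · rw [if_neg hy, if_neg (fun hand => hy hand.2)]
        rw [tsum_congr hcongr,
          (myTsum_level0 (fun s : Strat2 G => consistent2 G s h''.1) N'⁻¹).2]
      rw [hsum]
      by_cases hx1 : x.1 = 0
      · rw [if_pos ⟨hx1, myConsistent2_mono hsub hx⟩, if_pos ⟨hx1, hx⟩]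
        field_simp
      · rw [if_neg (fun hand => hx1 hand.1), if_neg (fun hand => hx1 hand.1), zero_mul] }

noncomputable def myUnif1 (hG : G.WellFormed) : CPS1 G :=
  haveI := myFinite_strat1 (G := G) hG
  { p := fun h x => if x.1 = 0 ∧ consistent1 G x.2 h.1 then
      (({s : Strat1 G | consistent1 G s h.1}).ncard : ℝ)⁻¹ else 0
    nonneg := fun h x => by
      split
      · positivity
      · exact le_refl 0
    supp := fun h x hx => by
      by_contra hc
      exact hx (if_neg (fun hand => hc hand.2))
    hasSum_one := fun h => by
      obtain ⟨hsum, hval⟩ := myTsum_level0 (fun s : Strat1 G => consistent1 G s h.1)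
        ((({s : Strat1 G | consistent1 G s h.1}).ncard : ℝ)⁻¹)
      refine hsum.hasSum_iff.2 ?_
      rw [hval, mul_inv_cancel₀]
      exact_mod_cast (myNcard_S1_pos hG h).ne'
    chain := fun h' h'' hsub hne x hx => by
      haveI := myFinite_strat1 (G := G) hG
      set N' := (({s : Strat1 G | consistent1 G s h'.1}).ncard : ℝ) with hN'
      set N'' := (({s : Strat1 G | consistent1 G s h''.1}).ncard : ℝ) with hN''
      have hN'pos : 0 < N' := by rw [hN']; exact_mod_cast myNcard_S1_pos hG h'
      have hN''pos : 0 < N'' := by rw [hN'']; exact_mod_cast myNcard_S1_pos hG h''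
      have hsum : (∑' y : ℕ × Strat1 G,
          (if consistent1 G y.2 h''.1 then
            (if y.1 = 0 ∧ consistent1 G y.2 h'.1 then N'⁻¹ else 0) else 0)) = N'' * N'⁻¹ := by
        have hcongr : ∀ y : ℕ × Strat1 G,
            (if consistent1 G y.2 h''.1 then
              (if y.1 = 0 ∧ consistent1 G y.2 h'.1 then N'⁻¹ else 0) else 0) =
            (if y.1 = 0 ∧ consistent1 G y.2 h''.1 then N'⁻¹ else 0) := by
          intro y
          by_cases hy : consistent1 G y.2 h''.1
          · rw [if_pos hy]
            by_cases hy1 : y.1 = 0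
            · rw [if_pos ⟨hy1, myConsistent1_mono hsub hy⟩, if_pos ⟨hy1, hy⟩]
            · rw [if_neg (fun hand => hy1 hand.1), if_neg (fun hand => hy1 hand.1)]
          · rw [if_neg hy, if_neg (fun hand => hy hand.2)]
        rw [tsum_congr hcongr,
          (myTsum_level0 (fun s : Strat1 G => consistent1 G s h''.1) N'⁻¹).2]
      rw [hsum]
      by_cases hx1 : x.1 = 0
      · rw [if_pos ⟨hx1, myConsistent1_mono hsub hx⟩, if_pos ⟨hx1, hx⟩]
        field_simp
      · rw [if_neg (fun hand => hx1 hand.1), if_neg (fun hand => hx1 hand.1), zero_mul] }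

end CPSAux
section StructAux

variable {A B : Type*} {G : MSGame A B}

lemma myUnif2_p (hG : G.WellFormed) (h : G.Hist) (x : ℕ × Strat2 G) :
    (myUnif2 hG).p h x = if x.1 = 0 ∧ consistent2 G x.2 h.1 then
      (({s : Strat2 G | consistent2 G s h.1}).ncard : ℝ)⁻¹ else 0 := rfl

lemma myUnif1_p (hG : G.WellFormed) (h : G.Hist) (x : ℕ × Strat1 G) :
    (myUnif1 hG).p h x = if x.1 = 0 ∧ consistent1 G x.2 h.1 then
      (({s : Strat1 G | consistent1 G s h.1}).ncard : ℝ)⁻¹ else 0 := rfl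

lemma myMarg2_zero (μ : CPS2 G) {h : G.Hist} {t : ℕ} (hm : margD2 μ h t = 0)
    (s : Strat2 G) : μ.p h (t, s) = 0 :=
  myEq_zero_of_tsum_zero (mySummable_slice (μ.hasSum_one h).summable t)
    (fun s' => μ.nonneg h (t, s')) hm s

lemma myMarg1_zero (μ : CPS1 G) {h : G.Hist} {t : ℕ} (hm : margD1 μ h t = 0)
    (s : Strat1 G) : μ.p h (t, s) = 0 :=
  myEq_zero_of_tsum_zero (mySummable_slice (μ.hasSum_one h).summable t)
    (fun s' => μ.nonneg h (t, s')) hm s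

lemma myCondC_pos2 (hG : G.WellFormed) (μ : CPS2 G)
    (hpos : ∀ s', 0 < μ.p (myRoot G hG) (0, s')) (h : G.Hist) :
    0 < ∑' y : ℕ × Strat2 G, (if consistent2 G y.2 h.1 then μ.p (myRoot G hG) y else 0) := by
  set g := fun y : ℕ × Strat2 G => if consistent2 G y.2 h.1 then μ.p (myRoot G hG) y else 0
    with hg
  have hgn : ∀ y, 0 ≤ g y := fun y => by
    rw [hg]; dsimp only; split
    · exact μ.nonneg _ _
    · exact le_refl 0
  have hgle : ∀ y, g y ≤ μ.p (myRoot G hG) y := fun y => by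
    rw [hg]; dsimp only; split
    · exact le_refl _
    · exact μ.nonneg _ _
  have hgs : Summable g := Summable.of_nonneg_of_le hgn hgle (μ.hasSum_one _).summable
  have hle := Summable.le_tsum hgs ((0 : ℕ), myConsStrat2 hG h.1 h.2.1) (fun j _ => hgn j)
  have heq : g ((0 : ℕ), myConsStrat2 hG h.1 h.2.1) =
      μ.p (myRoot G hG) (0, myConsStrat2 hG h.1 h.2.1) :=
    if_pos (myConsStrat2_consistent hG h.1 h.2.1)
  calc (0 : ℝ) < μ.p (myRoot G hG) (0, myConsStrat2 hG h.1 h.2.1) := hpos _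
    _ = g ((0 : ℕ), myConsStrat2 hG h.1 h.2.1) := heq.symm
    _ ≤ _ := hle

lemma myCondC_pos1 (hG : G.WellFormed) (μ : CPS1 G)
    (hpos : ∀ s', 0 < μ.p (myRoot G hG) (0, s')) (h : G.Hist) :
    0 < ∑' y : ℕ × Strat1 G, (if consistent1 G y.2 h.1 then μ.p (myRoot G hG) y else 0) := by
  set g := fun y : ℕ × Strat1 G => if consistent1 G y.2 h.1 then μ.p (myRoot G hG) y else 0
    with hg
  have hgn : ∀ y, 0 ≤ g y := fun y => by
    rw [hg]; dsimp only; split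
    · exact μ.nonneg _ _
    · exact le_refl 0
  have hgle : ∀ y, g y ≤ μ.p (myRoot G hG) y := fun y => by
    rw [hg]; dsimp only; split
    · exact le_refl _
    · exact μ.nonneg _ _
  have hgs : Summable g := Summable.of_nonneg_of_le hgn hgle (μ.hasSum_one _).summable
  have hle := Summable.le_tsum hgs ((0 : ℕ), myConsStrat1 hG h.1 h.2.1) (fun j _ => hgn j)
  have heq : g ((0 : ℕ), myConsStrat1 hG h.1 h.2.1) =
      μ.p (myRoot G hG) (0, myConsStrat1 hG h.1 h.2.1) :=
    if_pos (myConsStrat1_consistent hG h.1 h.2.1)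
  calc (0 : ℝ) < μ.p (myRoot G hG) (0, myConsStrat1 hG h.1 h.2.1) := hpos _
    _ = g ((0 : ℕ), myConsStrat1 hG h.1 h.2.1) := heq.symm
    _ ≤ _ := hle

lemma myCond_support2 (hG : G.WellFormed) (μ : CPS2 G)
    (hpos : ∀ s', 0 < μ.p (myRoot G hG) (0, s')) (h : G.Hist) (x : ℕ × Strat2 G)
    (hx : μ.p h x ≠ 0) : μ.p (myRoot G hG) x ≠ 0 := by
  by_cases hnil : h.1 = []
  · have : h = myRoot G hG := Subtype.ext hnil
    rwa [← this]
  · have hcons := μ.supp h x hx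
    have hchain := μ.chain (myRoot G hG) h List.nil_suffix (fun e => hnil e.symm) x hcons
    rw [hchain]
    exact mul_ne_zero hx (myCondC_pos2 hG μ hpos h).ne'

lemma myCond_support1 (hG : G.WellFormed) (μ : CPS1 G)
    (hpos : ∀ s', 0 < μ.p (myRoot G hG) (0, s')) (h : G.Hist) (x : ℕ × Strat1 G)
    (hx : μ.p h x ≠ 0) : μ.p (myRoot G hG) x ≠ 0 := by
  by_cases hnil : h.1 = []
  · have : h = myRoot G hG := Subtype.ext hnil
    rwa [← this]
  · have hcons := μ.supp h x hx
    have hchain := μ.chain (myRoot G hG) h List.nil_suffix (fun e => hnil e.symm) x hcons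
    rw [hchain]
    exact mul_ne_zero hx (myCondC_pos1 hG μ hpos h).ne'

lemma myFnorm_pos {f : ℕ → ℝ} (hfpos : ∀ n, 0 < f n) {k t : ℕ} (hk : k ≠ 0) :
    0 < fnorm f k t :=
  div_pos (hfpos t) (Finset.sum_pos (fun i _ => hfpos i)
    ⟨0, Finset.mem_range.2 (Nat.pos_of_ne_zero hk)⟩)

lemma myRoot_pos2 (hG : G.WellFormed) {f : ℕ → ℝ} {k : ℕ} (hfpos : ∀ n, 0 < f n)
    (hk : k ≠ 0) (μ : CPS2 G) (hD : memDeltaD2 G f k μ) :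
    ∀ s', 0 < μ.p (myRoot G hG) (0, s') := by
  obtain ⟨hDK1, hDK2, hDK3⟩ := hD hk
  have hm0 : margD2 μ (myRoot G hG) 0 = fnorm f k 0 :=
    hDK3 (myRoot G hG).2 0 (Nat.pos_of_ne_zero hk)
  have hfn : 0 < fnorm f k 0 := myFnorm_pos hfpos hk
  have hmpos : 0 < margD2 μ (myRoot G hG) 0 := hm0 ▸ hfn
  intro s'
  have hDK2' := hDK2 (myRoot G hG) hmpos s' (myConsistent2_nil s')
  set N := (({s'' : Strat2 G | consistent2 G s'' (myRoot G hG).1}).ncard : ℝ) with hN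
  have hNpos : 0 < N := by rw [hN]; exact_mod_cast myNcard_S2_pos hG _
  have hkey := (div_eq_div_iff hmpos.ne' hNpos.ne').1 hDK2'
  have hp : μ.p (myRoot G hG) (0, s') = margD2 μ (myRoot G hG) 0 / N := by
    rw [eq_div_iff hNpos.ne']; linarith
  rw [hp]
  positivity

lemma myRoot_pos1 (hG : G.WellFormed) {f : ℕ → ℝ} {k : ℕ} (hfpos : ∀ n, 0 < f n)
    (hk : k ≠ 0) (μ : CPS1 G) (hD : memDeltaD1 G f k μ) :
    ∀ s', 0 < μ.p (myRoot G hG) (0, s') := by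
  obtain ⟨hDK1, hDK2, hDK3⟩ := hD hk
  have hm0 : margD1 μ (myRoot G hG) 0 = fnorm f k 0 :=
    hDK3 (myRoot G hG).2 0 (Nat.pos_of_ne_zero hk)
  have hfn : 0 < fnorm f k 0 := myFnorm_pos hfpos hk
  have hmpos : 0 < margD1 μ (myRoot G hG) 0 := hm0 ▸ hfn
  intro s'
  have hDK2' := hDK2 (myRoot G hG) hmpos s' (myConsistent1_nil s')
  set N := (({s'' : Strat1 G | consistent1 G s'' (myRoot G hG).1}).ncard : ℝ) with hN
  have hNpos : 0 < N := by rw [hN]; exact_mod_cast myNcard_S1_pos hG _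
  have hkey := (div_eq_div_iff hmpos.ne' hNpos.ne').1 hDK2'
  have hp : μ.p (myRoot G hG) (0, s') = margD1 μ (myRoot G hG) 0 / N := by
    rw [eq_div_iff hNpos.ne']; linarith
  rw [hp]
  positivity

lemma myRoot_support2 (hG : G.WellFormed) (μ : CPS2 G) {P : Set (ℕ × Strat2 G)}
    (h1 : ∑' y : ℕ × Strat2 G, Set.indicator P (μ.p (myRoot G hG)) y = 1) :
    ∀ x, μ.p (myRoot G hG) x ≠ 0 → x ∈ P := fun x hx => by
  by_contra hc
  exact hx (mySupport_of_indicator_tsum_one (μ.hasSum_one _) (μ.nonneg _) h1 x hc)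

lemma myRoot_support1 (hG : G.WellFormed) (μ : CPS1 G) {P : Set (ℕ × Strat1 G)}
    (h1 : ∑' y : ℕ × Strat1 G, Set.indicator P (μ.p (myRoot G hG)) y = 1) :
    ∀ x, μ.p (myRoot G hG) x ≠ 0 → x ∈ P := fun x hx => by
  by_contra hc
  exact hx (mySupport_of_indicator_tsum_one (μ.hasSum_one _) (μ.nonneg _) h1 x hc)

lemma myBelief2 (hG : G.WellFormed) (μ : CPS2 G) {P : Set (ℕ × Strat2 G)}
    (hpos : ∀ s', 0 < μ.p (myRoot G hG) (0, s'))
    (hsupp : ∀ x, μ.p (myRoot G hG) x ≠ 0 → x ∈ P) (h : G.Hist) :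
    ∑' y : ℕ × Strat2 G, Set.indicator P (μ.p h) y = 1 := by
  rw [myTsum_indicator_of_support_subset]
  · exact (μ.hasSum_one h).tsum_eq
  · exact fun x hx => hsupp x (myCond_support2 hG μ hpos h x hx)

lemma myBelief1 (hG : G.WellFormed) (μ : CPS1 G) {P : Set (ℕ × Strat1 G)}
    (hpos : ∀ s', 0 < μ.p (myRoot G hG) (0, s'))
    (hsupp : ∀ x, μ.p (myRoot G hG) x ≠ 0 → x ∈ P) (h : G.Hist) :
    ∑' y : ℕ × Strat1 G, Set.indicator P (μ.p h) y = 1 := by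
  rw [myTsum_indicator_of_support_subset]
  · exact (μ.hasSum_one h).tsum_eq
  · exact fun x hx => hsupp x (myCond_support1 hG μ hpos h x hx)



end StructAux
section ProcAux

variable {A B : Type*} {G : MSGame A B} (v1 v2 : List (A × B) → ℝ) (f : ℕ → ℝ)

lemma mySeqRat1_zero (μ : CPS2 G) (s : Strat1 G) : seqRat1 G v1 0 μ s := by
  intro h _ s1' _
  have hz : ∀ s'' : Strat1 G, expU1 G v1 0 μ h s'' = 0 := by
    intro s''
    simp [expU1, payU1]
  rw [hz, hz]

lemma mySeqRat2_zero (μ : CPS1 G) (s : Strat2 G) : seqRat2 G v2 0 μ s := by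
  intro h _ s2' _
  have hz : ∀ s'' : Strat2 G, expU2 G v2 0 μ h s'' = 0 := by
    intro s''
    simp [expU2, payU2]
  rw [hz, hz]

lemma myLevel0 (hG : G.WellFormed) : ∀ n : ℕ,
    (∀ s : Strat1 G, ((0 : ℕ), s) ∈ (SigmaD G v1 v2 f n).1) ∧
    (∀ s : Strat2 G, ((0 : ℕ), s) ∈ (SigmaD G v1 v2 f n).2) := by
  intro n
  induction n with
  | zero => exact ⟨fun _ => trivial, fun _ => trivial⟩
  | succ n ih =>
    constructor
    · intro s
      refine ⟨ih.1 s, myUnif2 hG, fun h0 => absurd rfl h0, ?_, mySeqRat1_zero v1 _ s⟩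
      intro h _
      rw [myTsum_indicator_of_support_subset]
      · exact ((myUnif2 hG).hasSum_one h).tsum_eq
      · intro x hx
        rw [myUnif2_p] at hx
        have hx1 : x.1 = 0 := by
          by_contra hc; exact hx (if_neg fun hand => hc hand.1)
        have hxx : x = ((0 : ℕ), x.2) := Prod.ext hx1 rfl
        rw [hxx]
        exact ih.2 x.2
    · intro s
      refine ⟨ih.2 s, myUnif1 hG, fun h0 => absurd rfl h0, ?_, mySeqRat2_zero v2 _ s⟩
      intro h _
      rw [myTsum_indicator_of_support_subset]
      · exact ((myUnif1 hG).hasSum_one h).tsum_eq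
      · intro x hx
        rw [myUnif1_p] at hx
        have hx1 : x.1 = 0 := by
          by_contra hc; exact hx (if_neg fun hand => hc hand.1)
        have hxx : x = ((0 : ℕ), x.2) := Prod.ext hx1 rfl
        rw [hxx]
        exact ih.1 x.2

lemma mySigmaD_antitone1 {m n : ℕ} (hmn : m ≤ n) :
    (SigmaD G v1 v2 f n).1 ⊆ (SigmaD G v1 v2 f m).1 := by
  induction n, hmn using Nat.le_induction with
  | base => exact subset_rfl
  | succ n hmn ih => exact fun x hx => ih hx.1

lemma mySigmaD_antitone2 {m n : ℕ} (hmn : m ≤ n) :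
    (SigmaD G v1 v2 f n).2 ⊆ (SigmaD G v1 v2 f m).2 := by
  induction n, hmn using Nat.le_induction with
  | base => exact subset_rfl
  | succ n hmn ih => exact fun x hx => ih hx.1

/-- the persistence engine for player 1 -/
lemma myPersist1 (hG : G.WellFormed) {k : ℕ} {s : Strat1 G} (μ : CPS2 G)
    (hD : memDeltaD2 G f k μ) (hrat : seqRat1 G v1 k μ s)
    (hpos : ∀ s', 0 < μ.p (myRoot G hG) (0, s'))
    (hsupp : ∀ n x, μ.p (myRoot G hG) x ≠ 0 → x ∈ (SigmaD G v1 v2 f n).2) :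
    ∀ n, (k, s) ∈ (SigmaD G v1 v2 f n).1 := by
  intro n
  induction n with
  | zero => trivial
  | succ n ih =>
    refine ⟨ih, μ, hD, ?_, hrat⟩
    intro h _
    exact myBelief2 hG μ hpos (hsupp n) h

lemma myPersist2 (hG : G.WellFormed) {k : ℕ} {s : Strat2 G} (μ : CPS1 G)
    (hD : memDeltaD1 G f k μ) (hrat : seqRat2 G v2 k μ s)
    (hpos : ∀ s', 0 < μ.p (myRoot G hG) (0, s'))
    (hsupp : ∀ n x, μ.p (myRoot G hG) x ≠ 0 → x ∈ (SigmaD G v1 v2 f n).1) :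
    ∀ n, (k, s) ∈ (SigmaD G v1 v2 f n).2 := by
  intro n
  induction n with
  | zero => trivial
  | succ n ih =>
    refine ⟨ih, μ, hD, ?_, hrat⟩
    intro h _
    exact myBelief1 hG μ hpos (hsupp n) h

lemma myLambdaD_red1 {n k : ℕ} (h : k ≠ n + 1) :
    (LambdaD G v1 v2 f (n + 1)).1 k = (LambdaD G v1 v2 f n).1 k := by
  simp only [LambdaD]
  rw [if_neg h]

lemma myLambdaD_red2 {n k : ℕ} (h : k ≠ n + 1) :
    (LambdaD G v1 v2 f (n + 1)).2 k = (LambdaD G v1 v2 f n).2 k := by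
  simp only [LambdaD]
  rw [if_neg h]

lemma myLambdaD_zero : ∀ n : ℕ,
    (LambdaD G v1 v2 f n).1 0 = Set.univ ∧ (LambdaD G v1 v2 f n).2 0 = Set.univ := by
  intro n
  induction n with
  | zero => exact ⟨rfl, rfl⟩
  | succ n ih =>
    rw [myLambdaD_red1 v1 v2 f (by omega), myLambdaD_red2 v1 v2 f (by omega)]
    exact ih

lemma myLambdaD_stab : ∀ (n k : ℕ), k ≤ n →
    (LambdaD G v1 v2 f n).1 k = (LambdaD G v1 v2 f k).1 k ∧
    (LambdaD G v1 v2 f n).2 k = (LambdaD G v1 v2 f k).2 k := by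
  intro n
  induction n with
  | zero => intro k hk; interval_cases k; exact ⟨rfl, rfl⟩
  | succ n ih =>
    intro k hk
    by_cases hkn : k = n + 1
    · subst hkn; exact ⟨rfl, rfl⟩
    · have hk' : k ≤ n := by omega
      rw [myLambdaD_red1 v1 v2 f hkn, myLambdaD_red2 v1 v2 f hkn]
      exact ih k hk'

lemma myLambdaD_univ : ∀ (n k : ℕ), n < k →
    (LambdaD G v1 v2 f n).1 k = Set.univ ∧ (LambdaD G v1 v2 f n).2 k = Set.univ := by
  intro n
  induction n with
  | zero => intro k _; exact ⟨rfl, rfl⟩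
  | succ n ih =>
    intro k hk
    have hkn : k ≠ n + 1 := by omega
    rw [myLambdaD_red1 v1 v2 f hkn, myLambdaD_red2 v1 v2 f hkn]
    exact ih k (by omega)

end ProcAux
section CoreAux

variable {A B : Type*} {G : MSGame A B} (v1 v2 : List (A × B) → ℝ) (f : ℕ → ℝ)

lemma myLambdaD_diag1 (n : ℕ) : (LambdaD G v1 v2 f (n + 1)).1 (n + 1) =
    {s | ∃ μ : CPS2 G, memDeltaD2 G f (n + 1) μ ∧
      (∀ hr : G.feasible [] ∧ ¬G.terminal [],
        (∀ x : ℕ × Strat2 G, μ.p ⟨[], hr⟩ x ≠ 0 ↔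
          x.1 ≤ n ∧ x.2 ∈ (LambdaD G v1 v2 f n).2 x.1) ∧
        (∀ t : ℕ, t ≤ n → ∀ s2 s2' : Strat2 G, s2 ∈ (LambdaD G v1 v2 f n).2 t →
          s2' ∈ (LambdaD G v1 v2 f n).2 t →
          μ.p ⟨[], hr⟩ (t, s2) = μ.p ⟨[], hr⟩ (t, s2'))) ∧
      seqRat1 G v1 (n + 1) μ s} := by
  simp only [LambdaD]
  rw [if_true]

lemma myLambdaD_diag2 (n : ℕ) : (LambdaD G v1 v2 f (n + 1)).2 (n + 1) =
    {s | ∃ μ : CPS1 G, memDeltaD1 G f (n + 1) μ ∧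
      (∀ hr : G.feasible [] ∧ ¬G.terminal [],
        (∀ x : ℕ × Strat1 G, μ.p ⟨[], hr⟩ x ≠ 0 ↔
          x.1 ≤ n ∧ x.2 ∈ (LambdaD G v1 v2 f n).1 x.1) ∧
        (∀ t : ℕ, t ≤ n → ∀ s1 s1' : Strat1 G, s1 ∈ (LambdaD G v1 v2 f n).1 t →
          s1' ∈ (LambdaD G v1 v2 f n).1 t →
          μ.p ⟨[], hr⟩ (t, s1) = μ.p ⟨[], hr⟩ (t, s1'))) ∧
      seqRat2 G v2 (n + 1) μ s} := by
  simp only [LambdaD]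
  rw [if_true]

/-- survivors of `Σᵏ_{θ_{1k}}` persist forever -/
lemma myPersistLevel1 (hG : G.WellFormed) (hfpos : ∀ n, 0 < f n) {k : ℕ} (hk : k ≠ 0)
    (Hpers2 : ∀ t, t ≠ 0 → t < k → ∀ s : Strat2 G,
      (t, s) ∈ (SigmaD G v1 v2 f t).2 → ∀ n, (t, s) ∈ (SigmaD G v1 v2 f n).2) :
    ∀ s : Strat1 G, (k, s) ∈ (SigmaD G v1 v2 f k).1 → ∀ n, (k, s) ∈ (SigmaD G v1 v2 f n).1 := by
  intro s hs
  obtain ⟨m, rfl⟩ : ∃ m, k = m + 1 := ⟨k - 1, by omega⟩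
  obtain ⟨hprev, μ, hD, hbel, hrat⟩ := hs
  have hpos := myRoot_pos2 hG hfpos hk μ hD
  have hbelroot := hbel (myRoot G hG)
    ⟨((0 : ℕ), myConsStrat2 hG [] trivial), (myLevel0 v1 v2 f hG m).2 _, myConsistent2_nil _⟩
  have hroots := myRoot_support2 hG μ hbelroot
  have hsupp : ∀ n x, μ.p (myRoot G hG) x ≠ 0 → x ∈ (SigmaD G v1 v2 f n).2 := by
    intro n x hx
    have hxm := hroots x hx
    rcases Nat.eq_zero_or_pos x.1 with h0 | hp
    · rw [show x = ((0 : ℕ), x.2) from Prod.ext h0 rfl]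
      exact (myLevel0 v1 v2 f hG n).2 x.2
    · by_cases hxk : x.1 < m + 1
      · have h2 : (x.1, x.2) ∈ (SigmaD G v1 v2 f x.1).2 :=
          mySigmaD_antitone2 v1 v2 f (by omega) hxm
        exact Hpers2 x.1 (by omega) hxk x.2 h2 n
      · exfalso
        have hm0 : margD2 μ (myRoot G hG) x.1 = 0 := (hD hk).1 (myRoot G hG) x.1 (by omega)
        exact hx (myMarg2_zero μ hm0 x.2)
  exact myPersist1 v1 v2 f hG μ hD hrat hpos hsupp

lemma myPersistLevel2 (hG : G.WellFormed) (hfpos : ∀ n, 0 < f n) {k : ℕ} (hk : k ≠ 0)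
    (Hpers1 : ∀ t, t ≠ 0 → t < k → ∀ s : Strat1 G,
      (t, s) ∈ (SigmaD G v1 v2 f t).1 → ∀ n, (t, s) ∈ (SigmaD G v1 v2 f n).1) :
    ∀ s : Strat2 G, (k, s) ∈ (SigmaD G v1 v2 f k).2 → ∀ n, (k, s) ∈ (SigmaD G v1 v2 f n).2 := by
  intro s hs
  obtain ⟨m, rfl⟩ : ∃ m, k = m + 1 := ⟨k - 1, by omega⟩
  obtain ⟨hprev, μ, hD, hbel, hrat⟩ := hs
  have hpos := myRoot_pos1 hG hfpos hk μ hD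
  have hbelroot := hbel (myRoot G hG)
    ⟨((0 : ℕ), myConsStrat1 hG [] trivial), (myLevel0 v1 v2 f hG m).1 _, myConsistent1_nil _⟩
  have hroots := myRoot_support1 hG μ hbelroot
  have hsupp : ∀ n x, μ.p (myRoot G hG) x ≠ 0 → x ∈ (SigmaD G v1 v2 f n).1 := by
    intro n x hx
    have hxm := hroots x hx
    rcases Nat.eq_zero_or_pos x.1 with h0 | hp
    · rw [show x = ((0 : ℕ), x.2) from Prod.ext h0 rfl]
      exact (myLevel0 v1 v2 f hG n).1 x.2
    · by_cases hxk : x.1 < m + 1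
      · have h2 : (x.1, x.2) ∈ (SigmaD G v1 v2 f x.1).1 :=
          mySigmaD_antitone1 v1 v2 f (by omega) hxm
        exact Hpers1 x.1 (by omega) hxk x.2 h2 n
      · exfalso
        have hm0 : margD1 μ (myRoot G hG) x.1 = 0 := (hD hk).1 (myRoot G hG) x.1 (by omega)
        exact hx (myMarg1_zero μ hm0 x.2)
  exact myPersist2 v1 v2 f hG μ hD hrat hpos hsupp

end CoreAux
section DiagAux

variable {A B : Type*} {G : MSGame A B} (v1 v2 : List (A × B) → ℝ) (f : ℕ → ℝ)

lemma myLamSig1 (hG : G.WellFormed) (hfpos : ∀ n, 0 < f n) {m : ℕ}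
    (hgen2 : ∀ t, t ≠ 0 → t ≤ m →
      ∃ σ : Strat2 G, {s : Strat2 G | (t, s) ∈ (SigmaD G v1 v2 f t).2} = {σ})
    (Hpers2 : ∀ t, t ≠ 0 → t < m + 1 → ∀ s : Strat2 G,
      (t, s) ∈ (SigmaD G v1 v2 f t).2 → ∀ n, (t, s) ∈ (SigmaD G v1 v2 f n).2)
    (Hlam2 : ∀ t, t ≠ 0 → t ≤ m →
      (LambdaD G v1 v2 f t).2 t = {s : Strat2 G | (t, s) ∈ (SigmaD G v1 v2 f t).2}) :
    (LambdaD G v1 v2 f (m + 1)).1 (m + 1) =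
      {s : Strat1 G | (m + 1, s) ∈ (SigmaD G v1 v2 f (m + 1)).1} := by
  have hk : (m + 1 : ℕ) ≠ 0 := Nat.succ_ne_zero m
  rw [myLambdaD_diag1]
  ext s
  constructor
  · -- Λ ⊆ Σ
    rintro ⟨μ, hD, hcond, hrat⟩
    obtain ⟨hiff, -⟩ := hcond (myRoot G hG).2
    have hpos : ∀ s', 0 < μ.p (myRoot G hG) (0, s') := by
      intro s'
      have hne : μ.p (myRoot G hG) ((0 : ℕ), s') ≠ 0 :=
        (hiff ((0 : ℕ), s')).2 ⟨Nat.zero_le m, by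
          rw [(myLambdaD_zero v1 v2 f m).2]; trivial⟩
      exact lt_of_le_of_ne (μ.nonneg _ _) (Ne.symm hne)
    have hsupp : ∀ n x, μ.p (myRoot G hG) x ≠ 0 → x ∈ (SigmaD G v1 v2 f n).2 := by
      intro n x hx
      obtain ⟨hx1, hxl⟩ := (hiff x).1 hx
      rcases Nat.eq_zero_or_pos x.1 with h0 | hp
      · rw [show x = ((0 : ℕ), x.2) from Prod.ext h0 rfl]
        exact (myLevel0 v1 v2 f hG n).2 x.2
      · have hmem : x.2 ∈ {s : Strat2 G | (x.1, s) ∈ (SigmaD G v1 v2 f x.1).2} := by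
          rw [← Hlam2 x.1 (by omega) hx1, ← (myLambdaD_stab v1 v2 f m x.1 hx1).2]
          exact hxl
        exact Hpers2 x.1 (by omega) (by omega) x.2 hmem n
    exact myPersist1 v1 v2 f hG μ hD hrat hpos hsupp (m + 1)
  · -- Σ ⊆ Λ
    intro hs
    obtain ⟨hprev, μ, hD, hbel, hrat⟩ := hs
    have hpos := myRoot_pos2 hG hfpos hk μ hD
    have hbelroot := hbel (myRoot G hG)
      ⟨((0 : ℕ), myConsStrat2 hG [] trivial), (myLevel0 v1 v2 f hG m).2 _, myConsistent2_nil _⟩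
    have hroots := myRoot_support2 hG μ hbelroot
    refine ⟨μ, hD, ?_, hrat⟩
    intro hr
    have hre : (⟨[], hr⟩ : G.Hist) = myRoot G hG := rfl
    rw [hre]
    constructor
    · intro x
      constructor
      · intro hx
        have hxm := hroots x hx
        have hx1 : x.1 ≤ m := by
          by_contra hgt
          have hm0 : margD2 μ (myRoot G hG) x.1 = 0 := (hD hk).1 (myRoot G hG) x.1 (by omega)
          exact hx (myMarg2_zero μ hm0 x.2)
        refine ⟨hx1, ?_⟩
        rcases Nat.eq_zero_or_pos x.1 with h0 | hp
        · rw [h0, (myLambdaD_zero v1 v2 f m).2]; trivial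
        · have h2 : (x.1, x.2) ∈ (SigmaD G v1 v2 f x.1).2 :=
            mySigmaD_antitone2 v1 v2 f hx1 hxm
          rw [(myLambdaD_stab v1 v2 f m x.1 hx1).2, Hlam2 x.1 (by omega) hx1]
          exact h2
      · rintro ⟨hx1, hxl⟩
        rcases Nat.eq_zero_or_pos x.1 with h0 | hp
        · rw [show x = ((0 : ℕ), x.2) from Prod.ext h0 rfl]
          exact (hpos x.2).ne'
        · obtain ⟨σ, hσ⟩ := hgen2 x.1 (by omega) hx1
          have hxσ : x.2 = σ := by
            have hxl' : x.2 ∈ ({σ} : Set (Strat2 G)) := by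
              rw [← hσ, ← Hlam2 x.1 (by omega) hx1, ← (myLambdaD_stab v1 v2 f m x.1 hx1).2]
              exact hxl
            exact hxl'
          have hmarg : margD2 μ (myRoot G hG) x.1 = fnorm f (m + 1) x.1 :=
            (hD hk).2.2 (myRoot G hG).2 x.1 (by omega)
          have hfn : 0 < fnorm f (m + 1) x.1 := myFnorm_pos hfpos hk
          have hsingle : margD2 μ (myRoot G hG) x.1 = μ.p (myRoot G hG) (x.1, σ) := by
            apply tsum_eq_single
            intro s' hs'
            by_contra h0
            have hmem := hroots (x.1, s') h0
            have hss : (x.1, s') ∈ (SigmaD G v1 v2 f x.1).2 :=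
              mySigmaD_antitone2 v1 v2 f hx1 hmem
            have : s' ∈ ({σ} : Set (Strat2 G)) := by rw [← hσ]; exact hss
            exact hs' this
          have hne : μ.p (myRoot G hG) (x.1, σ) ≠ 0 := by
            rw [← hsingle, hmarg]; exact hfn.ne'
          rw [show x = (x.1, x.2) from rfl, hxσ]
          exact hne
    · intro t ht s2 s2' h2 h2'
      rcases Nat.eq_zero_or_pos t with h0 | hp
      · subst h0
        have hm0 : margD2 μ (myRoot G hG) 0 = fnorm f (m + 1) 0 :=
          (hD hk).2.2 (myRoot G hG).2 0 (by omega)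
        have hmpos : 0 < margD2 μ (myRoot G hG) 0 := hm0 ▸ myFnorm_pos hfpos hk
        have e1 := (hD hk).2.1 (myRoot G hG) hmpos s2 (myConsistent2_nil _)
        have e2 := (hD hk).2.1 (myRoot G hG) hmpos s2' (myConsistent2_nil _)
        have heq := e1.trans e2.symm
        exact mul_right_cancel₀ hmpos.ne' ((div_eq_div_iff hmpos.ne' hmpos.ne').1 heq)
      · obtain ⟨σ, hσ⟩ := hgen2 t (by omega) ht
        have hh2 : s2 ∈ ({σ} : Set (Strat2 G)) := by
          rw [← hσ, ← Hlam2 t (by omega) ht, ← (myLambdaD_stab v1 v2 f m t ht).2]; exact h2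
        have hh2' : s2' ∈ ({σ} : Set (Strat2 G)) := by
          rw [← hσ, ← Hlam2 t (by omega) ht, ← (myLambdaD_stab v1 v2 f m t ht).2]; exact h2'
        rw [show s2 = σ from hh2, show s2' = σ from hh2']

end DiagAux

section DiagAux2

variable {A B : Type*} {G : MSGame A B} (v1 v2 : List (A × B) → ℝ) (f : ℕ → ℝ)

lemma myLamSig2 (hG : G.WellFormed) (hfpos : ∀ n, 0 < f n) {m : ℕ}
    (hgen1 : ∀ t, t ≠ 0 → t ≤ m →
      ∃ σ : Strat1 G, {s : Strat1 G | (t, s) ∈ (SigmaD G v1 v2 f t).1} = {σ})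
    (Hpers1 : ∀ t, t ≠ 0 → t < m + 1 → ∀ s : Strat1 G,
      (t, s) ∈ (SigmaD G v1 v2 f t).1 → ∀ n, (t, s) ∈ (SigmaD G v1 v2 f n).1)
    (Hlam1 : ∀ t, t ≠ 0 → t ≤ m →
      (LambdaD G v1 v2 f t).1 t = {s : Strat1 G | (t, s) ∈ (SigmaD G v1 v2 f t).1}) :
    (LambdaD G v1 v2 f (m + 1)).2 (m + 1) =
      {s : Strat2 G | (m + 1, s) ∈ (SigmaD G v1 v2 f (m + 1)).2} := by
  have hk : (m + 1 : ℕ) ≠ 0 := Nat.succ_ne_zero m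
  rw [myLambdaD_diag2]
  ext s
  constructor
  · -- Λ ⊆ Σ
    rintro ⟨μ, hD, hcond, hrat⟩
    obtain ⟨hiff, -⟩ := hcond (myRoot G hG).2
    have hpos : ∀ s', 0 < μ.p (myRoot G hG) (0, s') := by
      intro s'
      have hne : μ.p (myRoot G hG) ((0 : ℕ), s') ≠ 0 :=
        (hiff ((0 : ℕ), s')).2 ⟨Nat.zero_le m, by
          rw [(myLambdaD_zero v1 v2 f m).1]; trivial⟩
      exact lt_of_le_of_ne (μ.nonneg _ _) (Ne.symm hne)
    have hsupp : ∀ n x, μ.p (myRoot G hG) x ≠ 0 → x ∈ (SigmaD G v1 v2 f n).1 := by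
      intro n x hx
      obtain ⟨hx1, hxl⟩ := (hiff x).1 hx
      rcases Nat.eq_zero_or_pos x.1 with h0 | hp
      · rw [show x = ((0 : ℕ), x.2) from Prod.ext h0 rfl]
        exact (myLevel0 v1 v2 f hG n).1 x.2
      · have hmem : x.2 ∈ {s : Strat1 G | (x.1, s) ∈ (SigmaD G v1 v2 f x.1).1} := by
          rw [← Hlam1 x.1 (by omega) hx1, ← (myLambdaD_stab v1 v2 f m x.1 hx1).1]
          exact hxl
        exact Hpers1 x.1 (by omega) (by omega) x.2 hmem n
    exact myPersist2 v1 v2 f hG μ hD hrat hpos hsupp (m + 1)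
  · -- Σ ⊆ Λ
    intro hs
    obtain ⟨hprev, μ, hD, hbel, hrat⟩ := hs
    have hpos := myRoot_pos1 hG hfpos hk μ hD
    have hbelroot := hbel (myRoot G hG)
      ⟨((0 : ℕ), myConsStrat1 hG [] trivial), (myLevel0 v1 v2 f hG m).1 _, myConsistent1_nil _⟩
    have hroots := myRoot_support1 hG μ hbelroot
    refine ⟨μ, hD, ?_, hrat⟩
    intro hr
    have hre : (⟨[], hr⟩ : G.Hist) = myRoot G hG := rfl
    rw [hre]
    constructor
    · intro x
      constructor
      · intro hx
        have hxm := hroots x hx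
        have hx1 : x.1 ≤ m := by
          by_contra hgt
          have hm0 : margD1 μ (myRoot G hG) x.1 = 0 := (hD hk).1 (myRoot G hG) x.1 (by omega)
          exact hx (myMarg1_zero μ hm0 x.2)
        refine ⟨hx1, ?_⟩
        rcases Nat.eq_zero_or_pos x.1 with h0 | hp
        · rw [h0, (myLambdaD_zero v1 v2 f m).1]; trivial
        · have h2 : (x.1, x.2) ∈ (SigmaD G v1 v2 f x.1).1 :=
            mySigmaD_antitone1 v1 v2 f hx1 hxm
          rw [(myLambdaD_stab v1 v2 f m x.1 hx1).1, Hlam1 x.1 (by omega) hx1]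
          exact h2
      · rintro ⟨hx1, hxl⟩
        rcases Nat.eq_zero_or_pos x.1 with h0 | hp
        · rw [show x = ((0 : ℕ), x.2) from Prod.ext h0 rfl]
          exact (hpos x.2).ne'
        · obtain ⟨σ, hσ⟩ := hgen1 x.1 (by omega) hx1
          have hxσ : x.2 = σ := by
            have hxl' : x.2 ∈ ({σ} : Set (Strat1 G)) := by
              rw [← hσ, ← Hlam1 x.1 (by omega) hx1, ← (myLambdaD_stab v1 v2 f m x.1 hx1).1]
              exact hxl
            exact hxl'
          have hmarg : margD1 μ (myRoot G hG) x.1 = fnorm f (m + 1) x.1 :=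
            (hD hk).2.2 (myRoot G hG).2 x.1 (by omega)
          have hfn : 0 < fnorm f (m + 1) x.1 := myFnorm_pos hfpos hk
          have hsingle : margD1 μ (myRoot G hG) x.1 = μ.p (myRoot G hG) (x.1, σ) := by
            apply tsum_eq_single
            intro s' hs'
            by_contra h0
            have hmem := hroots (x.1, s') h0
            have hss : (x.1, s') ∈ (SigmaD G v1 v2 f x.1).1 :=
              mySigmaD_antitone1 v1 v2 f hx1 hmem
            have : s' ∈ ({σ} : Set (Strat1 G)) := by rw [← hσ]; exact hss
            exact hs' this
          have hne : μ.p (myRoot G hG) (x.1, σ) ≠ 0 := by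
            rw [← hsingle, hmarg]; exact hfn.ne'
          rw [show x = (x.1, x.2) from rfl, hxσ]
          exact hne
    · intro t ht s2 s2' h2 h2'
      rcases Nat.eq_zero_or_pos t with h0 | hp
      · subst h0
        have hm0 : margD1 μ (myRoot G hG) 0 = fnorm f (m + 1) 0 :=
          (hD hk).2.2 (myRoot G hG).2 0 (by omega)
        have hmpos : 0 < margD1 μ (myRoot G hG) 0 := hm0 ▸ myFnorm_pos hfpos hk
        have e1 := (hD hk).2.1 (myRoot G hG) hmpos s2 (myConsistent1_nil _)
        have e2 := (hD hk).2.1 (myRoot G hG) hmpos s2' (myConsistent1_nil _)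
        have heq := e1.trans e2.symm
        exact mul_right_cancel₀ hmpos.ne' ((div_eq_div_iff hmpos.ne' hmpos.ne').1 heq)
      · obtain ⟨σ, hσ⟩ := hgen1 t (by omega) ht
        have hh2 : s2 ∈ ({σ} : Set (Strat1 G)) := by
          rw [← hσ, ← Hlam1 t (by omega) ht, ← (myLambdaD_stab v1 v2 f m t ht).1]; exact h2
        have hh2' : s2' ∈ ({σ} : Set (Strat1 G)) := by
          rw [← hσ, ← Hlam1 t (by omega) ht, ← (myLambdaD_stab v1 v2 f m t ht).1]; exact h2'
        rw [show s2 = σ from hh2, show s2' = σ from hh2']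


end DiagAux2


/-- Theorem 2, part 2: if for every player i and every k ≥ 1 the survivor
set `Σᵏ_{θ_{ik}}` of the dynamic Δ^κ-rationalization procedure is a singleton, then
`Λᵏ_{θ_{ik}} = Σᵏ_{θ_{ik}}` for every i, k, and the DCH solution coincides with dynamic
Δ^κ-rationalizability. -/
theorem dch_eq_sigmaD_of_generic {A B : Type*} (G : MSGame A B) (hG : G.WellFormed)
    (v1 v2 : List (A × B) → ℝ)
    (f : ℕ → ℝ) (hf : ∀ n, 0 < f n) (hfsum : HasSum f 1)
    (hgen : ∀ k : ℕ, 1 ≤ k →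
      (∃ s : Strat1 G, SigmaDSec1 G v1 v2 f k k = {s}) ∧
      (∃ s : Strat2 G, SigmaDSec2 G v1 v2 f k k = {s})) :
    (∀ k : ℕ, LambdaDSec1 G v1 v2 f k k = SigmaDSec1 G v1 v2 f k k) ∧
    (∀ k : ℕ, LambdaDSec2 G v1 v2 f k k = SigmaDSec2 G v1 v2 f k k) ∧
    (∀ k : ℕ, (⋂ n : ℕ, LambdaDSec1 G v1 v2 f n k) = ⋂ n : ℕ, SigmaDSec1 G v1 v2 f n k) ∧
    (∀ k : ℕ, (⋂ n : ℕ, LambdaDSec2 G v1 v2 f n k) = ⋂ n : ℕ, SigmaDSec2 G v1 v2 f n k) := by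
  have hgen1' : ∀ t : ℕ, t ≠ 0 →
      ∃ σ : Strat1 G, {s : Strat1 G | (t, s) ∈ (SigmaD G v1 v2 f t).1} = {σ} := by
    intro t ht
    obtain ⟨σ, hσ⟩ := (hgen t (Nat.one_le_iff_ne_zero.2 ht)).1
    exact ⟨σ, hσ⟩
  have hgen2' : ∀ t : ℕ, t ≠ 0 →
      ∃ σ : Strat2 G, {s : Strat2 G | (t, s) ∈ (SigmaD G v1 v2 f t).2} = {σ} := by
    intro t ht
    obtain ⟨σ, hσ⟩ := (hgen t (Nat.one_le_iff_ne_zero.2 ht)).2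
    exact ⟨σ, hσ⟩
  have key : ∀ k : ℕ, k ≠ 0 →
      ((∀ s : Strat1 G, (k, s) ∈ (SigmaD G v1 v2 f k).1 →
          ∀ n, (k, s) ∈ (SigmaD G v1 v2 f n).1) ∧
       (∀ s : Strat2 G, (k, s) ∈ (SigmaD G v1 v2 f k).2 →
          ∀ n, (k, s) ∈ (SigmaD G v1 v2 f n).2) ∧
       (LambdaD G v1 v2 f k).1 k = {s : Strat1 G | (k, s) ∈ (SigmaD G v1 v2 f k).1} ∧
       (LambdaD G v1 v2 f k).2 k = {s : Strat2 G | (k, s) ∈ (SigmaD G v1 v2 f k).2}) := by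
    intro k
    induction k using Nat.strong_induction_on with
    | _ k IH =>
      intro hk
      have Hpers1 : ∀ t, t ≠ 0 → t < k → ∀ s : Strat1 G,
          (t, s) ∈ (SigmaD G v1 v2 f t).1 → ∀ n, (t, s) ∈ (SigmaD G v1 v2 f n).1 :=
        fun t ht htk => (IH t htk ht).1
      have Hpers2 : ∀ t, t ≠ 0 → t < k → ∀ s : Strat2 G,
          (t, s) ∈ (SigmaD G v1 v2 f t).2 → ∀ n, (t, s) ∈ (SigmaD G v1 v2 f n).2 :=
        fun t ht htk => (IH t htk ht).2.1
      refine ⟨myPersistLevel1 v1 v2 f hG hf hk Hpers2,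
              myPersistLevel2 v1 v2 f hG hf hk Hpers1, ?_, ?_⟩
      · obtain ⟨m, rfl⟩ : ∃ m, k = m + 1 := ⟨k - 1, by omega⟩
        exact myLamSig1 v1 v2 f hG hf (fun t ht _ => hgen2' t ht)
          (fun t ht htk => Hpers2 t ht htk)
          (fun t ht htm => (IH t (by omega) ht).2.2.2)
      · obtain ⟨m, rfl⟩ : ∃ m, k = m + 1 := ⟨k - 1, by omega⟩
        exact myLamSig2 v1 v2 f hG hf (fun t ht _ => hgen1' t ht)
          (fun t ht htk => Hpers1 t ht htk)
          (fun t ht htm => (IH t (by omega) ht).2.2.1)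
  have C1 : ∀ k : ℕ, LambdaDSec1 G v1 v2 f k k = SigmaDSec1 G v1 v2 f k k := by
    intro k
    rcases Nat.eq_zero_or_pos k with h0 | hp
    · subst h0
      ext s
      exact ⟨fun _ => trivial, fun _ => trivial⟩
    · exact (key k (by omega)).2.2.1
  have C2 : ∀ k : ℕ, LambdaDSec2 G v1 v2 f k k = SigmaDSec2 G v1 v2 f k k := by
    intro k
    rcases Nat.eq_zero_or_pos k with h0 | hp
    · subst h0
      ext s
      exact ⟨fun _ => trivial, fun _ => trivial⟩
    · exact (key k (by omega)).2.2.2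
  refine ⟨C1, C2, ?_, ?_⟩
  · intro k
    rcases Nat.eq_zero_or_pos k with h0 | hp
    · subst h0
      have hL : ∀ n, LambdaDSec1 G v1 v2 f n 0 = Set.univ :=
        fun n => (myLambdaD_zero v1 v2 f n).1
      have hS : ∀ n, SigmaDSec1 G v1 v2 f n 0 = Set.univ :=
        fun n => Set.eq_univ_of_forall (fun s => (myLevel0 v1 v2 f hG n).1 s)
      simp [hL, hS]
    · have hk : k ≠ 0 := by omega
      have hL : (⋂ n, LambdaDSec1 G v1 v2 f n k) = LambdaDSec1 G v1 v2 f k k := by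
        ext s
        constructor
        · intro hs; exact Set.mem_iInter.1 hs k
        · intro hs
          apply Set.mem_iInter.2
          intro n
          rcases lt_or_ge n k with h | h
          · show s ∈ (LambdaD G v1 v2 f n).1 k
            rw [(myLambdaD_univ v1 v2 f n k h).1]; trivial
          · show s ∈ (LambdaD G v1 v2 f n).1 k
            rw [(myLambdaD_stab v1 v2 f n k h).1]; exact hs
      have hS : (⋂ n, SigmaDSec1 G v1 v2 f n k) = SigmaDSec1 G v1 v2 f k k := by
        ext s
        constructor
        · intro hs; exact Set.mem_iInter.1 hs k
        · intro hs
          apply Set.mem_iInter.2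
          intro n
          exact (key k hk).1 s hs n
      rw [hL, hS]
      exact C1 k
  · intro k
    rcases Nat.eq_zero_or_pos k with h0 | hp
    · subst h0
      have hL : ∀ n, LambdaDSec2 G v1 v2 f n 0 = Set.univ :=
        fun n => (myLambdaD_zero v1 v2 f n).2
      have hS : ∀ n, SigmaDSec2 G v1 v2 f n 0 = Set.univ :=
        fun n => Set.eq_univ_of_forall (fun s => (myLevel0 v1 v2 f hG n).2 s)
      simp [hL, hS]
    · have hk : k ≠ 0 := by omega
      have hL : (⋂ n, LambdaDSec2 G v1 v2 f n k) = LambdaDSec2 G v1 v2 f k k := by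
        ext s
        constructor
        · intro hs; exact Set.mem_iInter.1 hs k
        · intro hs
          apply Set.mem_iInter.2
          intro n
          rcases lt_or_ge n k with h | h
          · show s ∈ (LambdaD G v1 v2 f n).2 k
            rw [(myLambdaD_univ v1 v2 f n k h).2]; trivial
          · show s ∈ (LambdaD G v1 v2 f n).2 k
            rw [(myLambdaD_stab v1 v2 f n k h).2]; exact hs
      have hS : (⋂ n, SigmaDSec2 G v1 v2 f n k) = SigmaDSec2 G v1 v2 f k k := by
        ext s
        constructor
        · intro hs; exact Set.mem_iInter.1 hs k
        · intro hs
          apply Set.mem_iInter.2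
          intro n
          exact (key k hk).2.1 s hs n
      rw [hL, hS]
      exact C2 k
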